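/- Let N be a positive integer and for each prime p let e_p(N) be the exponent of p in the prime factorization of N. Then the finite adele ring 𝔸_f decomposes as the disjoint union over α ∈ ℚ/Nℤ of the cosets α + K_N, where K_N = ∏_p p^{e_p(N)}ℤ_p. Precisely: for every x ∈ 𝔸_f there exists α ∈ ℚ such that |x_p − α|_p ≤ p^{−e_p(N)} for every prime p, and if α, α′ ∈ ℚ both have this property then (α − α′)/N ∈ ℤ. -/

import Mathlib

instance (p : Nat.Primes) : Fact (p : ℕ).Prime := ⟨p.2⟩

/-- The finite adele ring `𝔸_f` of `ℚ`, modelled concretely as the restricted product of the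
fields `ℚ_p` with respect to the subrings `ℤ_p`: families `(x_p)_p` with `‖x_p‖_p ≤ 1` for
all but finitely many primes `p`. -/
def FiniteAdele : Type :=
  {x : (p : Nat.Primes) → ℚ_[(p : ℕ)] // ∀ᶠ p in Filter.cofinite, ‖x p‖ ≤ 1}

-- per prime approximation
lemma my_approx (p : ℕ) [hp : Fact p.Prime] (z : ℚ_[p]) :
    ∃ r : ℚ, ‖z - (r : ℚ_[p])‖ ≤ 1 ∧ ∀ ℓ : ℕ, ℓ.Prime → ℓ ≠ p → padicNorm ℓ r ≤ 1 := by
  by_cases hz : ‖z‖ ≤ 1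
  · exact ⟨0, by simpa using hz, fun ℓ _ _ => by simp [padicNorm.zero]⟩
  · have hz0 : z ≠ 0 := by rintro rfl; simp at hz
    -- choose n with ‖z‖ ≤ p^n
    obtain ⟨n, hn⟩ : ∃ n : ℕ, ‖z‖ ≤ (p : ℝ) ^ (n : ℤ) := by
      obtain ⟨n, hn⟩ := pow_unbounded_of_one_lt ‖z‖
        (by exact_mod_cast hp.out.one_lt : (1:ℝ) < (p:ℝ))
      exact ⟨n, by rw [zpow_natCast]; exact hn.le⟩
    have hw : ‖(p : ℚ_[p]) ^ n * z‖ ≤ 1 := by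
      rw [norm_mul, Padic.norm_p_pow]
      calc (p:ℝ) ^ (-(n:ℤ)) * ‖z‖ ≤ (p:ℝ) ^ (-(n:ℤ)) * (p:ℝ) ^ (n:ℤ) := by
            apply mul_le_mul_of_nonneg_left hn (zpow_nonneg (by exact_mod_cast Nat.zero_le p) _)
        _ = 1 := by rw [← zpow_add₀ (by exact_mod_cast hp.out.ne_zero : (p:ℝ) ≠ 0)]; simp
    set w : ℤ_[p] := ⟨(p : ℚ_[p]) ^ n * z, hw⟩ with hwdef
    have hppos : (0:ℝ) < (p:ℝ) := by exact_mod_cast hp.out.pos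
    have hε : (0:ℝ) < (p:ℝ) ^ (-(n:ℤ)) := zpow_pos hppos _
    obtain ⟨a, ha⟩ := PadicInt.denseRange_intCast.exists_dist_lt w hε
    have ha' : ‖(p : ℚ_[p]) ^ n * z - (a : ℚ_[p])‖ < (p:ℝ) ^ (-(n:ℤ)) := by
      rw [dist_eq_norm, PadicInt.norm_def] at ha
      push_cast at ha
      rwa [] at ha
    refine ⟨(a : ℚ) / (p : ℚ) ^ n, ?_, ?_⟩
    · have hcast : (((a : ℚ) / (p:ℚ) ^ n : ℚ) : ℚ_[p]) = (a : ℚ_[p]) / (p : ℚ_[p]) ^ n := by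
        push_cast; ring
      have hpn : ((p : ℚ_[p]) ^ n) ≠ 0 := by
        apply pow_ne_zero; exact_mod_cast hp.out.ne_zero
      have : z - (((a : ℚ) / (p:ℚ) ^ n : ℚ) : ℚ_[p]) =
          ((p : ℚ_[p]) ^ n * z - (a : ℚ_[p])) / (p : ℚ_[p]) ^ n := by
        rw [hcast]; field_simp
      rw [this, norm_div, Padic.norm_p_pow]
      exact (div_le_one hε).mpr ha'.le
    · intro ℓ hℓ hℓp
      haveI : Fact ℓ.Prime := ⟨hℓ⟩
      rw [padicNorm.div]
      have h1 : padicNorm ℓ ((p:ℚ) ^ n) = 1 := by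
        rw [show ((p:ℚ) ^ n) = ((p ^ n : ℕ) : ℚ) by push_cast; ring,
          padicNorm.nat_eq_one_iff]
        intro hdvd
        exact hℓp ((Nat.prime_dvd_prime_iff_eq hℓ hp.out).mp (hℓ.dvd_of_dvd_pow hdvd))
      rw [h1, div_one]
      exact padicNorm.of_int a

lemma my_key (y : (p : Nat.Primes) → ℚ_[(p : ℕ)])
    (hy : {p : Nat.Primes | ¬ ‖y p‖ ≤ 1}.Finite) :
    ∃ β : ℚ, ∀ p : Nat.Primes, ‖y p - ((β : ℚ) : ℚ_[(p : ℕ)])‖ ≤ 1 := by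
  classical
  set S := hy.toFinset with hS
  choose r hr1 hr2 using fun p : Nat.Primes => my_approx (p : ℕ) (y p)
  refine ⟨∑ p ∈ S, r p, fun q => ?_⟩
  have hsum : ∀ T : Finset Nat.Primes, q ∉ T → padicNorm (q : ℕ) (∑ p ∈ T, r p) ≤ 1 := by
    intro T hqT
    rcases T.eq_empty_or_nonempty with rfl | hT
    · simp [padicNorm.zero]
    · refine padicNorm.sum_le hT fun p hp => hr2 p (q : ℕ) q.2 fun h => hqT ?_
      have : q = p := Subtype.ext h
      rwa [this]
  by_cases hq : q ∈ S
  · have hsplit : (∑ p ∈ S, r p) = r q + ∑ p ∈ S.erase q, r p :=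
      (Finset.add_sum_erase S r hq).symm
    have h2 : ‖((r q - ∑ p ∈ S, r p : ℚ) : ℚ_[(q : ℕ)])‖ ≤ 1 := by
      rw [Padic.eq_padicNorm]
      have : r q - ∑ p ∈ S, r p = -(∑ p ∈ S.erase q, r p) := by rw [hsplit]; ring
      rw [this, padicNorm.neg]
      exact_mod_cast hsum _ (Finset.notMem_erase q S)
    have : y q - ((∑ p ∈ S, r p : ℚ) : ℚ_[(q : ℕ)]) =
        (y q - ((r q : ℚ) : ℚ_[(q : ℕ)])) + ((r q - ∑ p ∈ S, r p : ℚ) : ℚ_[(q : ℕ)]) := by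
      push_cast; ring
    rw [this]
    exact (Padic.nonarchimedean _ _).trans (max_le (hr1 q) h2)
  · have hyq : ‖y q‖ ≤ 1 := by
      by_contra h; exact hq (hy.mem_toFinset.mpr h)
    have h2 : ‖((∑ p ∈ S, r p : ℚ) : ℚ_[(q : ℕ)])‖ ≤ 1 := by
      rw [Padic.eq_padicNorm]; exact_mod_cast hsum S hq
    calc ‖y q - ((∑ p ∈ S, r p : ℚ) : ℚ_[(q : ℕ)])‖
        ≤ max ‖y q‖ ‖-((∑ p ∈ S, r p : ℚ) : ℚ_[(q : ℕ)])‖ := by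
          rw [sub_eq_add_neg]; exact Padic.nonarchimedean _ _
      _ ≤ 1 := max_le hyq (by rwa [norm_neg])

lemma my_normN (N : ℕ) (hN : 0 < N) (p : ℕ) [hp : Fact p.Prime] :
    padicNorm p (N : ℚ) = (p : ℚ) ^ (-(N.factorization p : ℤ)) := by
  have h0 : (N : ℚ) ≠ 0 := by exact_mod_cast hN.ne'
  rw [padicNorm.eq_zpow_of_nonzero h0, padicValRat.of_nat, Nat.factorization_def N hp.out]

lemma my_normN_real (N : ℕ) (hN : 0 < N) (p : ℕ) [hp : Fact p.Prime] :
    ‖((N : ℚ) : ℚ_[p])‖ = (p : ℝ) ^ (-(N.factorization p : ℤ)) := by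
  rw [Padic.eq_padicNorm, my_normN N hN p]
  push_cast
  ring

lemma my_int (q : ℚ) (h : ∀ p : ℕ, p.Prime → padicNorm p q ≤ 1) : ∃ k : ℤ, q = k := by
  suffices hden : q.den = 1 by
    refine ⟨q.num, ?_⟩
    conv_lhs => rw [← Rat.num_div_den q]
    rw [hden]; simp
  by_contra hden
  obtain ⟨p, hp, hpd⟩ := Nat.exists_prime_and_dvd hden
  haveI : Fact p.Prime := ⟨hp⟩
  have hnum : ¬ (p : ℤ) ∣ q.num := by
    intro hd
    have : p ∣ q.num.natAbs := Int.natCast_dvd.mp hd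
    have := Nat.dvd_gcd this hpd
    rw [q.reduced] at this
    exact hp.one_lt.ne' (Nat.dvd_one.mp this)
  have h1 : padicNorm p (q.num : ℚ) = 1 := by
    rw [show ((q.num : ℚ)) = ((q.num : ℤ) : ℚ) by norm_cast]
    exact (padicNorm.int_eq_one_iff q.num).mpr hnum
  have h2 : padicNorm p (q.den : ℚ) < 1 := (padicNorm.nat_lt_one_iff q.den).mpr hpd
  have hdpos : 0 < padicNorm p (q.den : ℚ) := by
    rcases lt_or_eq_of_le (padicNorm.nonneg (p := p) (q.den : ℚ)) with h | h
    · exact h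
    · exfalso
      have := padicNorm.zero_of_padicNorm_eq_zero h.symm
      exact q.den_nz (by exact_mod_cast this)
  have heq : padicNorm p q = padicNorm p (q.num : ℚ) / padicNorm p (q.den : ℚ) := by
    rw [← padicNorm.div]
    congr 1
    exact (Rat.num_div_den q).symm
  have : 1 < padicNorm p q := by
    rw [heq, h1]
    exact (one_lt_div hdpos).mpr h2
  exact absurd (h p hp) (not_le.mpr this)


/-- Decomposition `𝔸_f = ⨆_{α ∈ ℚ/Nℤ} (α + K_N)` where `K_N = ∏_p p^{e_p(N)} ℤ_p`:
for every finite adele `x` there is a rational `α` with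
`|x_p - α|_p ≤ p^{-e_p(N)}` for every prime `p` (that is, `x - α ∈ K_N`), and any two such
rationals differ by an element of `N ℤ` (so the cosets are disjoint). -/
theorem finiteAdele_coset_decomposition (N : ℕ) (hN : 0 < N) :
    (∀ x : FiniteAdele, ∃ α : ℚ, ∀ p : Nat.Primes,
        ‖x.1 p - ((α : ℚ) : ℚ_[(p : ℕ)])‖ ≤ ((p : ℕ) : ℝ) ^ (-(N.factorization (p : ℕ) : ℤ))) ∧
    ∀ (x : FiniteAdele) (α α' : ℚ),
      (∀ p : Nat.Primes,
        ‖x.1 p - ((α : ℚ) : ℚ_[(p : ℕ)])‖ ≤ ((p : ℕ) : ℝ) ^ (-(N.factorization (p : ℕ) : ℤ))) →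
      (∀ p : Nat.Primes,
        ‖x.1 p - ((α' : ℚ) : ℚ_[(p : ℕ)])‖ ≤ ((p : ℕ) : ℝ) ^ (-(N.factorization (p : ℕ) : ℤ))) →
      ∃ k : ℤ, α - α' = (k : ℚ) * (N : ℚ) := by
  have hNQ : (N : ℚ) ≠ 0 := by exact_mod_cast hN.ne'
  constructor
  · intro x
    -- define y p = x p / N
    set y : (p : Nat.Primes) → ℚ_[(p : ℕ)] :=
      fun p => x.1 p / (((N : ℚ) : ℚ_[(p : ℕ)])) with hy
    have hNp : ∀ p : Nat.Primes, (((N : ℚ) : ℚ_[(p : ℕ)])) ≠ 0 := by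
      intro p
      exact_mod_cast fun h => hNQ (by exact_mod_cast h)
    have hyfin : {p : Nat.Primes | ¬ ‖y p‖ ≤ 1}.Finite := by
      have hx : {p : Nat.Primes | ¬ ‖x.1 p‖ ≤ 1}.Finite := by
        have := x.2
        rwa [Filter.eventually_cofinite] at this
      have hdvd : {p : Nat.Primes | (p : ℕ) ∣ N}.Finite := by
        have : {p : Nat.Primes | (p : ℕ) ∣ N} =
            (fun p : Nat.Primes => (p : ℕ)) ⁻¹' {n : ℕ | n ∣ N} := rfl
        rw [this]
        exact Set.Finite.preimage (Set.injOn_of_injective Subtype.coe_injective)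
          (Set.Finite.subset (Set.finite_le_nat N) (fun n hn => Nat.le_of_dvd hN hn))
      apply Set.Finite.subset (hx.union hdvd)
      intro p hp
      by_contra hmem
      simp only [Set.mem_union, Set.mem_setOf_eq, not_or, not_not] at hmem
      obtain ⟨h1, h2⟩ := hmem
      apply hp
      have he : N.factorization (p : ℕ) = 0 := Nat.factorization_eq_zero_of_not_dvd h2
      have : ‖(((N : ℚ) : ℚ_[(p : ℕ)]))‖ = 1 := by
        rw [my_normN_real N hN (p : ℕ), he]; simp
      simp only [Set.mem_setOf_eq, hy, norm_div, this, div_one]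
      exact h1
    obtain ⟨β, hβ⟩ := my_key y hyfin
    refine ⟨(N : ℚ) * β, fun p => ?_⟩
    have hx_eq : x.1 p - (((N : ℚ) * β : ℚ) : ℚ_[(p : ℕ)]) =
        ((N : ℚ) : ℚ_[(p : ℕ)]) * (y p - ((β : ℚ) : ℚ_[(p : ℕ)])) := by
      rw [hy]
      rw [show (((N : ℚ) * β : ℚ) : ℚ_[(p : ℕ)]) = ((N:ℚ) : ℚ_[(p : ℕ)]) * ((β : ℚ) : ℚ_[(p : ℕ)]) by push_cast; ring]
      rw [mul_sub, mul_div_cancel₀ _ (hNp p)]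
    rw [hx_eq, norm_mul, my_normN_real N hN (p : ℕ)]
    calc ((p : ℕ) : ℝ) ^ (-(N.factorization (p : ℕ) : ℤ)) * ‖y p - ((β : ℚ) : ℚ_[(p : ℕ)])‖
        ≤ ((p : ℕ) : ℝ) ^ (-(N.factorization (p : ℕ) : ℤ)) * 1 := by
          apply mul_le_mul_of_nonneg_left (hβ p) (zpow_nonneg (by positivity) _)
      _ = _ := mul_one _
  · intro x α α' h h'
    have key : ∀ p : Nat.Primes, padicNorm (p : ℕ) (α - α') ≤
        ((p : ℕ) : ℚ) ^ (-(N.factorization (p : ℕ) : ℤ)) := by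
      intro p
      have hreal : ‖(((α - α' : ℚ)) : ℚ_[(p : ℕ)])‖ ≤
          ((p : ℕ) : ℝ) ^ (-(N.factorization (p : ℕ) : ℤ)) := by
        have heq : (((α - α' : ℚ)) : ℚ_[(p : ℕ)]) =
            (x.1 p - ((α' : ℚ) : ℚ_[(p : ℕ)])) + -(x.1 p - ((α : ℚ) : ℚ_[(p : ℕ)])) := by
          push_cast; ring
        rw [heq]
        refine (Padic.nonarchimedean _ _).trans (max_le (h' p) ?_)
        rw [norm_neg]; exact h p
      rw [Padic.eq_padicNorm] at hreal
      have : (((p : ℕ) : ℝ)) ^ (-(N.factorization (p : ℕ) : ℤ)) =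
          ((((p : ℕ) : ℚ) ^ (-(N.factorization (p : ℕ) : ℤ)) : ℚ) : ℝ) := by
        push_cast; ring
      rw [this] at hreal
      exact_mod_cast hreal
    have hq : ∀ p : ℕ, p.Prime → padicNorm p ((α - α') / (N : ℚ)) ≤ 1 := by
      intro p hp
      haveI : Fact p.Prime := ⟨hp⟩
      rw [padicNorm.div, my_normN N hN p]
      have hpos : (0 : ℚ) < (p : ℚ) ^ (-(N.factorization p : ℤ)) := by
        apply zpow_pos
        exact_mod_cast hp.pos
      rw [div_le_one hpos]
      exact key ⟨p, hp⟩
    obtain ⟨k, hk⟩ := my_int _ hq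
    refine ⟨k, ?_⟩
    have := hk
    rw [div_eq_iff hNQ] at this
    rw [this]
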